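/- Let F be a field, let φ ∈ F[U,V] be a nonzero homogeneous polynomial of degree D ≥ 1, and let P, Q ∈ F[U,V] be nonzero homogeneous polynomials of degrees m and n respectively, with m ≥ n. If P − Q belongs to the ideal of F[U,V] generated by φ − 1, then D divides m − n and P = Q·φ^{(m−n)/D}. -/

import Mathlib

open MvPolynomial

variable {F : Type} [Field F]

private lemma hcomp_mul {φ : MvPolynomial (Fin 2) F} {D : ℕ} (hhom : φ.IsHomogeneous D)
    (R : MvPolynomial (Fin 2) F) (k : ℕ) :
    homogeneousComponent (k + D) (R * φ) = homogeneousComponent k R * φ := by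
  conv_lhs => rw [← sum_homogeneousComponent R, Finset.sum_mul, map_sum]
  have h : ∀ i ∈ Finset.range (R.totalDegree + 1),
      homogeneousComponent (k + D) (homogeneousComponent i R * φ) =
        if k = i then homogeneousComponent i R * φ else 0 := by
    intro i _
    rw [homogeneousComponent_of_mem
      ((mem_homogeneousSubmodule _ _).2 ((homogeneousComponent_isHomogeneous i R).mul hhom))]
    simp [Nat.add_right_cancel_iff]
  rw [Finset.sum_congr rfl h, Finset.sum_ite_eq]
  split
  · rfl
  · rename_i hk
    rw [homogeneousComponent_eq_zero, zero_mul]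
    simpa using Nat.lt_of_succ_le (Nat.le_of_not_lt (by simpa using hk))

private lemma hcomp_mul_low {φ : MvPolynomial (Fin 2) F} {D : ℕ} (hhom : φ.IsHomogeneous D)
    (R : MvPolynomial (Fin 2) F) {k : ℕ} (hk : k < D) :
    homogeneousComponent k (R * φ) = 0 := by
  conv_lhs => rw [← sum_homogeneousComponent R, Finset.sum_mul, map_sum]
  apply Finset.sum_eq_zero
  intro i _
  rw [homogeneousComponent_of_mem
    ((mem_homogeneousSubmodule _ _).2 ((homogeneousComponent_isHomogeneous i R).mul hhom))]
  simp only [ite_eq_right_iff]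
  intro h
  exact absurd h (by omega)

private lemma exists_extreme_comp (R : MvPolynomial (Fin 2) F) (hR : R ≠ 0) :
    ∃ b a : ℕ, b ≤ a ∧ homogeneousComponent b R ≠ 0 ∧ homogeneousComponent a R ≠ 0 ∧
      (∀ k < b, homogeneousComponent k R = 0) ∧ (∀ k, a < k → homogeneousComponent k R = 0) := by
  have hs : (R.support.image Finsupp.degree).Nonempty :=
    (Finset.image_nonempty).2 (Finset.nonempty_iff_ne_empty.2 (mt MvPolynomial.support_eq_empty.1 hR))
  set s := R.support.image Finsupp.degree with hsdef
  refine ⟨s.min' hs, s.max' hs, s.min'_le _ (s.max'_mem hs), ?_, ?_, ?_, ?_⟩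
  · obtain ⟨d, hd, hdeg⟩ := Finset.mem_image.1 (s.min'_mem hs)
    intro h
    have := coeff_homogeneousComponent (s.min' hs) R d
    rw [h, if_pos hdeg] at this
    exact (mem_support_iff.1 hd) this.symm
  · obtain ⟨d, hd, hdeg⟩ := Finset.mem_image.1 (s.max'_mem hs)
    intro h
    have := coeff_homogeneousComponent (s.max' hs) R d
    rw [h, if_pos hdeg] at this
    exact (mem_support_iff.1 hd) this.symm
  · intro k hk
    apply homogeneousComponent_eq_zero'
    intro d hd
    have : s.min' hs ≤ d.degree := Finset.min'_le _ _ (Finset.mem_image_of_mem _ hd)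
    omega
  · intro k hk
    apply homogeneousComponent_eq_zero'
    intro d hd
    have : d.degree ≤ s.max' hs := Finset.le_max' _ _ (Finset.mem_image_of_mem _ hd)
    omega

private lemma homog_mem_span_eq_zero {φ : MvPolynomial (Fin 2) F} {D : ℕ}
    (hφ : φ ≠ 0) (hD : 1 ≤ D) (hhom : φ.IsHomogeneous D)
    {H : MvPolynomial (Fin 2) F} {d : ℕ} (hH : H.IsHomogeneous d)
    (hmem : H ∈ Ideal.span {φ - 1}) : H = 0 := by
  obtain ⟨R, hR⟩ := Ideal.mem_span_singleton'.1 hmem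
  by_contra hne
  have hR0 : R ≠ 0 := by rintro rfl; simp at hR; exact hne hR.symm
  obtain ⟨b, a, hba, hb, ha, hbmin, hamax⟩ := exists_extreme_comp R hR0
  have key : H + R = R * φ := by linear_combination -hR
  have rel : ∀ k, (if k = d then H else 0) + homogeneousComponent k R
      = homogeneousComponent k (R * φ) := by
    intro k
    have hc := congrArg (homogeneousComponent k) key
    rwa [map_add, homogeneousComponent_of_mem ((mem_homogeneousSubmodule _ _).2 hH)] at hc
  have rela := rel (a + D)
  rw [hamax _ (by omega), hcomp_mul hhom, add_zero] at rela
  have had : a + D = d := by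
    by_contra h
    rw [if_neg h] at rela
    exact mul_ne_zero ha hφ rela.symm
  rw [if_pos had] at rela
  have relb := rel b
  have hlow : homogeneousComponent b (R * φ) = 0 := by
    rcases lt_or_ge b D with h | h
    · exact hcomp_mul_low hhom R h
    · have : b - D + D = b := by omega
      rw [← this, hcomp_mul hhom, hbmin _ (by omega), zero_mul]
  rw [hlow] at relb
  by_cases hbd : b = d
  · omega
  · rw [if_neg hbd, zero_add] at relb
    exact hb relb

private lemma step_lemma {φ : MvPolynomial (Fin 2) F} {D : ℕ}
    (hφ : φ ≠ 0) (hD : 1 ≤ D) (hhom : φ.IsHomogeneous D)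
    {P Q : MvPolynomial (Fin 2) F} {m n : ℕ}
    (hP : P ≠ 0) (hPhom : P.IsHomogeneous m) (hQ : Q ≠ 0) (hQhom : Q.IsHomogeneous n)
    (hlt : n < m) (hmem : P - Q ∈ Ideal.span {φ - 1}) :
    ∃ P', P' ≠ 0 ∧ P'.IsHomogeneous (m - D) ∧ D ≤ m ∧ P = P' * φ ∧
      P' - Q ∈ Ideal.span {φ - 1} := by
  obtain ⟨R, hR⟩ := Ideal.mem_span_singleton'.1 hmem
  have hR0 : R ≠ 0 := by
    rintro rfl
    simp only [zero_mul] at hR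
    have hPQ : P = Q := sub_eq_zero.1 hR.symm
    exact absurd ((hPhom.totalDegree hP).symm.trans (hPQ ▸ hQhom.totalDegree hQ)) (by omega)
  obtain ⟨b, a, hba, hb, ha, hbmin, hamax⟩ := exists_extreme_comp R hR0
  have key : P + R = Q + R * φ := by linear_combination -hR
  have rel : ∀ k, (if k = m then P else 0) + homogeneousComponent k R
      = (if k = n then Q else 0) + homogeneousComponent k (R * φ) := by
    intro k
    have hc := congrArg (homogeneousComponent k) key
    rwa [map_add, map_add, homogeneousComponent_of_mem ((mem_homogeneousSubmodule _ _).2 hPhom),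
      homogeneousComponent_of_mem ((mem_homogeneousSubmodule _ _).2 hQhom)] at hc
  have rela := rel (a + D)
  rw [hamax _ (by omega), hcomp_mul hhom, add_zero] at rela
  by_cases han : a + D = n
  · exfalso
    rw [if_neg (by omega), if_pos han] at rela
    have relm := rel m
    have hlow : homogeneousComponent m (R * φ) = 0 := by
      rcases lt_or_ge m D with h | h
      · exact hcomp_mul_low hhom R h
      · have : m - D + D = m := by omega
        rw [← this, hcomp_mul hhom, hamax _ (by omega), zero_mul]
    rw [hlow, if_pos rfl, if_neg (by omega), hamax _ (by omega), add_zero, add_zero] at relm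
    exact hP relm
  · by_cases ham : a + D = m
    · rw [if_pos ham, if_neg han, zero_add] at rela
      refine ⟨homogeneousComponent a R, ha, ?_, by omega, rela, ?_⟩
      · have : a = m - D := by omega
        exact this ▸ homogeneousComponent_isHomogeneous a R
      · have heq : homogeneousComponent a R - Q
            = (P - Q) - homogeneousComponent a R * (φ - 1) := by
          rw [rela]; ring
        rw [heq]
        exact Ideal.sub_mem _ hmem
          (Ideal.mul_mem_left _ _ (Ideal.subset_span (Set.mem_singleton _)))
    · exfalso
      rw [if_neg ham, if_neg han, zero_add] at rela
      exact mul_ne_zero ha hφ rela.symm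

/-- Let `F` be a field, `φ ∈ F[U,V]` a nonzero homogeneous polynomial of degree `D ≥ 1`, and
`P, Q ∈ F[U,V]` nonzero homogeneous polynomials of degrees `m` and `n` with `m ≥ n`.  If
`P − Q` belongs to the ideal generated by `φ − 1`, then `D ∣ m − n` and
`P = Q·φ^{(m−n)/D}`. -/
theorem homogeneous_sub_mem_span_sub_one (F : Type) [Field F]
    (φ P Q : MvPolynomial (Fin 2) F) (D m n : ℕ)
    (hφ : φ ≠ 0) (hD : 1 ≤ D) (hhom : φ.IsHomogeneous D)
    (hP : P ≠ 0) (hQ : Q ≠ 0) (hPhom : P.IsHomogeneous m) (hQhom : Q.IsHomogeneous n)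
    (hmn : n ≤ m) (hmem : P - Q ∈ Ideal.span {φ - 1}) :
    D ∣ m - n ∧ P = Q * φ ^ ((m - n) / D) := by
  induction m using Nat.strong_induction_on generalizing P Q n with
  | _ m IH =>
  rcases eq_or_lt_of_le hmn with heq | hlt
  · subst heq
    have h0 : P - Q = 0 := homog_mem_span_eq_zero hφ hD hhom (hPhom.sub hQhom) hmem
    rw [Nat.sub_self]
    exact ⟨dvd_zero _, by simp [sub_eq_zero.1 h0]⟩
  · obtain ⟨P', hP'0, hP'hom, hDm, hPeq, hmem'⟩ :=
      step_lemma hφ hD hhom hP hPhom hQ hQhom hlt hmem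
    by_cases hcase : n ≤ m - D
    · obtain ⟨hdvd, heq⟩ := IH (m - D) (by omega) P' Q n hP'0 hQ hP'hom hQhom hcase hmem'
      obtain ⟨c, hc⟩ := hdvd
      have h0 : m - n = (m - D - n) + D := by omega
      have h1 : m - n = D * (c + 1) := by rw [h0, hc, Nat.mul_succ]
      refine ⟨⟨c + 1, h1⟩, ?_⟩
      rw [hPeq, heq, hc, h1, Nat.mul_div_cancel_left _ (by omega : 0 < D),
        Nat.mul_div_cancel_left _ (by omega : 0 < D), mul_assoc, ← pow_succ]
    · exfalso
      have hmem'' : Q - P' ∈ Ideal.span {φ - 1} := by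
        have h : Q - P' = -(P' - Q) := by ring
        rw [h]; exact neg_mem hmem'
      obtain ⟨hdvd, -⟩ := IH n hlt Q P' (m - D) hQ hP'0 hQhom hP'hom (by omega) hmem''
      obtain ⟨c, hc⟩ := hdvd
      have hc1 : 0 < c := by
        rcases Nat.eq_zero_or_pos c with rfl | h
        · simp at hc; omega
        · exact h
      have hDle : D ≤ n - (m - D) := hc ▸ Nat.le_mul_of_pos_right D hc1
      omega
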